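/- Spectral formula for the N-walk generating function (Lemma 3): under the one-walk Bethe hypotheses, for every t ≥ 0, y^i ∈ U^{p'}_L(N) and y^f ∈ U^p_L(N) (where p' = p if t is even and p' is the opposite parity to p if t is odd), Z^N_t(y^i → y^f) = V(y^i) · Σ_{k ∈ K_N} Φ^{p'}_k(y^i) Λ_k^t Ψ^p_k(y^f)*, where V(y^i) = ∏_{α=1}^N v(y^i_α). -/

import Mathlib

open Finset BigOperators
open scoped Classical

noncomputable section

/-- The odd sites of the strip: `{y : 1 ≤ y ≤ L, y odd}`. -/
def SetO (L : ℤ) : Finset ℤ := (Finset.Icc 1 L).filter (fun y => Odd y)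

/-- The even sites of the strip: `{y : 0 ≤ y ≤ L, y even}`. -/
def SetE (L : ℤ) : Finset ℤ := (Finset.Icc 0 L).filter (fun y => Even y)

/-- Parity-indexed site sets: `true ↦ odd`, `false ↦ even`. -/
def Sp (L : ℤ) : Bool → Finset ℤ := fun p => if p then SetO L else SetE L

/-- Strictly increasing `N`-tuples with entries in `S`. -/
def UU {α : Type*} [LinearOrder α] (S : Finset α) (N : ℕ) : Finset (Fin N → α) :=
  (Fintype.piFinset (fun _ => S)).filter (fun y => ∀ i j : Fin N, i < j → y i < y j)

/-- One-step transfer matrix entry: `w y y'` when `|y - y'| = 1`, and `0` otherwise. -/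
def T1 (w : ℤ → ℤ → ℂ) (y y' : ℤ) : ℂ := if |y - y'| = 1 then w y y' else 0

/-- `N`-walk transfer matrix entry: product of one-step entries. -/
def TN (w : ℤ → ℤ → ℂ) {N : ℕ} (y y' : Fin N → ℤ) : ℂ := ∏ i, T1 w (y i) (y' i)

/-- Powers of a matrix indexed by a finite set `S`. -/
def matPow {α : Type*} [DecidableEq α] (S : Finset α) (M : α → α → ℂ) : ℕ → α → α → ℂ
  | 0 => fun y y' => if y = y' then 1 else 0
  | r + 1 => fun y y' => ∑ z ∈ S, matPow S M r y z * M z y'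

/-- Weight of a family of `N` walks of length `t`. -/
def walkWeight (w : ℤ → ℤ → ℂ) (v : ℤ → ℂ) {N t : ℕ} (y : Fin N → Fin (t + 1) → ℤ) : ℂ :=
  (∏ j, v (y j 0)) * ∏ m : Fin t, ∏ j, w (y j m.castSucc) (y j m.succ)

/-- The constraints on families of non-intersecting walks in the strip `0 ≤ y ≤ L`. -/
def stripCond (L : ℤ) {N t : ℕ} (yi yf : Fin N → ℤ) (y : Fin N → Fin (t + 1) → ℤ) : Prop :=
  (∀ j, y j 0 = yi j) ∧ (∀ j, y j (Fin.last t) = yf j) ∧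
    (∀ j m, 0 ≤ y j m ∧ y j m ≤ L) ∧
    (∀ j, ∀ m : Fin t, y j m.succ = y j m.castSucc + 1 ∨ y j m.succ = y j m.castSucc - 1) ∧
    (∀ m, ∀ i j : Fin N, i < j → y i m < y j m)

/-- The `N`-walk strip generating function `Z^N_t(y^i → y^f)`. -/
def Zgen (L : ℤ) (w : ℤ → ℤ → ℂ) (v : ℤ → ℂ) (N t : ℕ) (yi yf : Fin N → ℤ) : ℂ :=
  ∑ y ∈ (Fintype.piFinset
      (fun _ : Fin N => Fintype.piFinset (fun _ : Fin (t + 1) => Finset.Icc 0 L))).filter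
        (stripCond L yi yf), walkWeight w v y

/-- The constraints on families of non-intersecting walks with a single wall `y ≥ 0`. -/
def barCond {N t : ℕ} (yi yf : Fin N → ℤ) (y : Fin N → Fin (t + 1) → ℤ) : Prop :=
  (∀ j, y j 0 = yi j) ∧ (∀ j, y j (Fin.last t) = yf j) ∧
    (∀ j m, 0 ≤ y j m) ∧
    (∀ j, ∀ m : Fin t, y j m.succ = y j m.castSucc + 1 ∨ y j m.succ = y j m.castSucc - 1) ∧
    (∀ m, ∀ i j : Fin N, i < j → y i m < y j m)

/-- The one-wall `N`-walk generating function `Z̄^N_t(y^i → y^f)`. -/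
def Zbar (w : ℤ → ℤ → ℂ) (v : ℤ → ℂ) (N t : ℕ) (yi yf : Fin N → ℤ) : ℂ :=
  ∑ᶠ (y : Fin N → Fin (t + 1) → ℤ) (_ : barCond yi yf y), walkWeight w v y

/-- The Bethe Ansatz determinant built from a family of one-walk vectors. -/
def BA {K X : Type*} {N : ℕ} (φ : K → X → ℂ) (k : Fin N → K) (y : Fin N → X) : ℂ :=
  ∑ σ : Equiv.Perm (Fin N), ((Equiv.Perm.sign σ : ℤ) : ℂ) * ∏ a, φ (k (σ a)) (y a)

end
noncomputable section AuxLemmas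

open Equiv

lemma mem_Sp {L : ℤ} {p : Bool} {y : ℤ} :
    y ∈ Sp L p ↔ 0 ≤ y ∧ y ≤ L ∧ (if p then Odd y else Even y) := by
  cases p with
  | true =>
    simp only [Sp, if_true, SetO, Finset.mem_filter, Finset.mem_Icc]
    constructor
    · rintro ⟨⟨h1, h2⟩, h3⟩; exact ⟨by omega, h2, h3⟩
    · rintro ⟨h1, h2, h3⟩
      refine ⟨⟨?_, h2⟩, h3⟩
      rcases h3 with ⟨m, hm⟩; omega
  | false =>
    simp only [Sp, Bool.false_eq_true, if_false, SetE, Finset.mem_filter, Finset.mem_Icc]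
    tauto

lemma mem_UU {α : Type*} [LinearOrder α] {S : Finset α} {N : ℕ} {y : Fin N → α} :
    y ∈ UU S N ↔ (∀ i, y i ∈ S) ∧ ∀ i j : Fin N, i < j → y i < y j := by
  simp [UU, Fintype.mem_piFinset]

lemma Sp_gap {L : ℤ} {p : Bool} {N : ℕ} {y : Fin N → ℤ} (hy : y ∈ UU (Sp L p) N)
    {a b : Fin N} (h : a < b) : y a + 2 ≤ y b := by
  obtain ⟨hmem, hmono⟩ := mem_UU.mp hy
  have ha := (mem_Sp.mp (hmem a)).2.2
  have hb := (mem_Sp.mp (hmem b)).2.2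
  have hlt := hmono a b h
  cases p with
  | true =>
    simp only [if_true] at ha hb
    rcases ha with ⟨m, hm⟩; rcases hb with ⟨m', hm'⟩; omega
  | false =>
    simp only [Bool.false_eq_true, if_false] at ha hb
    rcases ha with ⟨m, hm⟩; rcases hb with ⟨m', hm'⟩; omega

lemma BA_eq_det {K X : Type*} {N : ℕ} (φ : K → X → ℂ) (k : Fin N → K) (y : Fin N → X) :
    BA φ k y = Matrix.det (Matrix.of fun a b => φ (k a) (y b)) := by
  rw [Matrix.det_apply, BA]
  refine Finset.sum_congr rfl fun σ _ => ?_
  simp [Units.smul_def, zsmul_eq_mul]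

lemma BA_comp_perm {K X : Type*} {N : ℕ} (φ : K → X → ℂ) (k : Fin N → K) (y : Fin N → X)
    (σ : Equiv.Perm (Fin N)) :
    BA φ (k ∘ σ) y = ((Equiv.Perm.sign σ : ℤ) : ℂ) * BA φ k y := by
  rw [BA_eq_det, BA_eq_det]
  have : (Matrix.of fun a b => φ ((k ∘ σ) a) (y b)) =
      (Matrix.of fun a b => φ (k a) (y b)).submatrix σ id := rfl
  rw [this, Matrix.det_permute]

lemma BA_zero_of_k {K X : Type*} {N : ℕ} (φ : K → X → ℂ) {k : Fin N → K} (y : Fin N → X)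
    {a b : Fin N} (hab : a ≠ b) (h : k a = k b) : BA φ k y = 0 := by
  rw [BA_eq_det]
  exact Matrix.det_zero_of_row_eq hab (by funext j; simp [Matrix.of_apply, h])

lemma BA_zero_of_y {K X : Type*} {N : ℕ} (φ : K → X → ℂ) (k : Fin N → K) {y : Fin N → X}
    {a b : Fin N} (hab : a ≠ b) (h : y a = y b) : BA φ k y = 0 := by
  rw [BA_eq_det]
  exact Matrix.det_zero_of_column_eq hab (fun i => by simp [Matrix.of_apply, h])

lemma BA_zero_of_not_inj {K X : Type*} {N : ℕ} (φ : K → X → ℂ) {k : Fin N → K} (y : Fin N → X)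
    (h : ¬ Function.Injective k) : BA φ k y = 0 := by
  simp only [Function.Injective, not_forall] at h
  obtain ⟨a, b, hk, hab⟩ := h
  exact BA_zero_of_k φ y hab hk

lemma star_BA {K X : Type*} {N : ℕ} (φ : K → X → ℂ) (k : Fin N → K) (y : Fin N → X) :
    star (BA φ k y) = BA (fun κ x => star (φ κ x)) k y := by
  simp [BA, star_sum, star_prod, star_mul']

end AuxLemmas
noncomputable section CBsec

lemma sum_BA_mul_BA {K : Type*} [Fintype K] [LinearOrder K] {N : ℕ}
    (S : Finset ℤ) (φ ψ' : K → ℤ → ℂ)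
    (hcomp : ∀ y ∈ S, ∀ y' ∈ S, ∑ k : K, φ k y * ψ' k y' = if y = y' then 1 else 0)
    {y y' : Fin N → ℤ} (hy : y ∈ UU S N) (hy' : y' ∈ UU S N) :
    ∑ k ∈ UU (Finset.univ : Finset K) N, BA φ k y * BA ψ' k y' =
      if y = y' then 1 else 0 := by
  obtain ⟨hyS, hymono⟩ := mem_UU.mp hy
  obtain ⟨hy'S, hy'mono⟩ := mem_UU.mp hy'
  have hym : StrictMono y := fun i j h => hymono i j h
  have hy'm : StrictMono y' := fun i j h => hy'mono i j h
  set g : (Fin N → K) → ℂ := fun k => (∏ a, φ (k a) (y a)) * BA ψ' k y' with hg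
  have step1 : ∑ k ∈ UU (Finset.univ : Finset K) N, BA φ k y * BA ψ' k y'
      = ∑ k : Fin N → K, g k := by
    have h1 : ∀ k, BA φ k y * BA ψ' k y' = ∑ σ : Equiv.Perm (Fin N), g (k ∘ σ) := by
      intro k
      rw [BA, Finset.sum_mul]
      refine Finset.sum_congr rfl fun σ _ => ?_
      rw [hg]; dsimp only
      rw [BA_comp_perm]
      have hsgn : ((Equiv.Perm.sign σ : ℤ) : ℂ) * ((Equiv.Perm.sign σ : ℤ) : ℂ) = 1 := by
        rcases Int.units_eq_one_or (Equiv.Perm.sign σ) with h | h <;> rw [h] <;> norm_num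
      simp only [Function.comp]
      ring
    simp_rw [h1]
    rw [← Finset.sum_product']
    have hzero : ∀ k : Fin N → K, ¬ Function.Injective k → g k = 0 := by
      intro k hk
      rw [hg]; dsimp only
      rw [BA_zero_of_not_inj ψ' y' hk, mul_zero]
    have : ∑ k : Fin N → K, g k
        = ∑ k ∈ Finset.univ.filter (fun k : Fin N → K => Function.Injective k), g k := by
      rw [Finset.sum_filter_of_ne]
      intro k _ hkne
      by_contra hinj
      exact hkne (hzero k hinj)
    rw [this]
    refine Finset.sum_bij (fun a _ => a.1 ∘ a.2) ?_ ?_ ?_ ?_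
    · rintro ⟨k, σ⟩ ha
      obtain ⟨hk, -⟩ := Finset.mem_product.mp ha
      have hkm : StrictMono k := fun i j h => (mem_UU.mp hk).2 i j h
      simp only [Finset.mem_filter, Finset.mem_univ, true_and]
      exact hkm.injective.comp σ.injective
    · rintro ⟨k, σ⟩ ha ⟨k', σ'⟩ ha' heq
      obtain ⟨hk, -⟩ := Finset.mem_product.mp ha
      obtain ⟨hk', -⟩ := Finset.mem_product.mp ha'
      have hkm : StrictMono k := fun i j h => (mem_UU.mp hk).2 i j h
      have hk'm : StrictMono k' := fun i j h => (mem_UU.mp hk').2 i j h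
      replace heq : k ∘ ⇑σ = k' ∘ ⇑σ' := heq
      haveI : WellFoundedLT (Fin N) := Finite.to_wellFoundedLT
      have hrange : Set.range k = Set.range k' := by
        have h1 : Set.range (k ∘ ⇑σ) = Set.range k := by
          rw [Set.range_comp, Equiv.range_eq_univ, Set.image_univ]
        have h2 : Set.range (k' ∘ ⇑σ') = Set.range k' := by
          rw [Set.range_comp, Equiv.range_eq_univ, Set.image_univ]
        rw [← h1, ← h2, heq]
      have hkk' : k = k' := (StrictMono.range_inj hkm hk'm).mp hrange
      subst hkk'
      have hσ : σ = σ' := by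
        ext a
        have := hkm.injective (congrFun heq a)
        exact congrArg Fin.val this
      rw [hσ]
    · intro b hb
      have hb' : Function.Injective b := (Finset.mem_filter.mp hb).2
      set s : Finset K := Finset.image b Finset.univ with hs
      have hcard : s.card = N := by
        rw [hs, Finset.card_image_of_injective _ hb', Finset.card_univ, Fintype.card_fin]
      set e := s.orderIsoOfFin hcard with he
      set k : Fin N → K := fun a => (e a : K) with hk
      have hkUU : k ∈ UU (Finset.univ : Finset K) N := by
        refine mem_UU.mpr ⟨fun i => Finset.mem_univ _, fun i j h => ?_⟩
        exact_mod_cast e.strictMono h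
      have hmem : ∀ a, b a ∈ s := fun a => Finset.mem_image_of_mem b (Finset.mem_univ a)
      set σf : Fin N → Fin N := fun a => e.symm ⟨b a, hmem a⟩ with hσf
      have hσinj : Function.Injective σf := by
        intro a c h
        apply hb'
        have := congrArg (fun x => (e x : K)) h
        simpa [hσf] using this
      refine ⟨⟨k, Equiv.ofBijective σf (Finite.injective_iff_bijective.mp hσinj)⟩,
        Finset.mem_product.mpr ⟨hkUU, Finset.mem_univ _⟩, ?_⟩
      funext a
      simp [hk, hσf, Equiv.ofBijective, Function.comp]
    · intro a _; rfl
  have step2 : ∑ k : Fin N → K, g k = ∑ τ : Equiv.Perm (Fin N),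
      ((Equiv.Perm.sign τ : ℤ) : ℂ) * (if ∀ a, y a = y' (τ⁻¹ a) then 1 else 0) := by
    have expand : ∀ k : Fin N → K, g k = ∑ τ : Equiv.Perm (Fin N),
        ((Equiv.Perm.sign τ : ℤ) : ℂ) * ∏ a, (φ (k a) (y a) * ψ' (k a) (y' (τ⁻¹ a))) := by
      intro k
      rw [hg]; dsimp only
      rw [BA, Finset.mul_sum]
      refine Finset.sum_congr rfl fun τ _ => ?_
      rw [Finset.prod_mul_distrib]
      have : ∏ a, ψ' (k a) (y' (τ⁻¹ a)) = ∏ a, ψ' (k (τ a)) (y' a) := by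
        rw [← Equiv.prod_comp τ (fun a => ψ' (k a) (y' (τ⁻¹ a)))]
        simp
      rw [this]; ring
    simp_rw [expand]
    rw [Finset.sum_comm]
    refine Finset.sum_congr rfl fun τ _ => ?_
    rw [← Finset.mul_sum]
    congr 1
    have hpi : ∑ k : Fin N → K, ∏ a, (φ (k a) (y a) * ψ' (k a) (y' (τ⁻¹ a)))
        = ∏ a, ∑ x : K, φ x (y a) * ψ' x (y' (τ⁻¹ a)) := by
      rw [Finset.prod_univ_sum (fun _ => (Finset.univ : Finset K))]
      rw [Fintype.piFinset_univ]
    rw [hpi]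
    have : ∀ a : Fin N, ∑ x : K, φ x (y a) * ψ' x (y' (τ⁻¹ a))
        = if y a = y' (τ⁻¹ a) then 1 else 0 := fun a => hcomp _ (hyS a) _ (hy'S _)
    simp_rw [this]
    rw [Finset.prod_boole]
    simp
  rw [step1, step2]
  rw [Finset.sum_eq_single (1 : Equiv.Perm (Fin N))]
  · simp [funext_iff]
  · intro τ _ hτ
    suffices h : ¬ ∀ a, y a = y' (τ⁻¹ a) by rw [if_neg h, mul_zero]
    intro hall
    haveI : WellFoundedLT (Fin N) := Finite.to_wellFoundedLT
    have h1 : y = y' ∘ ⇑τ⁻¹ := funext hall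
    have hrange : Set.range y = Set.range y' := by
      rw [h1, Set.range_comp, Equiv.range_eq_univ, Set.image_univ]
    have hyy' : y = y' := (StrictMono.range_inj hym hy'm).mp hrange
    apply hτ
    have heq2 : ∀ a, y' (τ⁻¹ a) = y' a := by
      intro a; rw [← hall a, hyy']
    have hid : ∀ a : Fin N, τ⁻¹ a = a := fun a => hy'm.injective (heq2 a)
    ext a
    have h3 := hid (τ a)
    rw [Equiv.Perm.inv_def, Equiv.symm_apply_apply] at h3
    rw [← h3]
    simp
  · intro h; exact absurd (Finset.mem_univ _) h
end CBsec
noncomputable section EigSec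

lemma left_eig {K : Type*} [Fintype K] [DecidableEq K] (L : ℤ) (w : ℤ → ℤ → ℂ) (φ ψ : Bool → K → ℤ → ℂ)
    (lam : K → ℂ)
    (eig : ∀ (q : Bool) (κ : K), ∀ y ∈ Sp L q,
      ∑ y' ∈ Sp L (!q), T1 w y y' * φ (!q) κ y' = lam κ * φ q κ y)
    (hort : ∀ (p : Bool) (k k' : K),
      ∑ y ∈ Sp L p, star (ψ p k y) * φ p k' y = if k = k' then 1 else 0)
    (hcomp : ∀ (p : Bool), ∀ y ∈ Sp L p, ∀ y' ∈ Sp L p,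
      ∑ k : K, φ p k y * star (ψ p k y') = if y = y' then 1 else 0)
    (q : Bool) (κ : K) :
    ∀ y' ∈ Sp L (!q),
      ∑ y ∈ Sp L q, star (ψ q κ y) * T1 w y y' = lam κ * star (ψ (!q) κ y') := by
  intro y' hy'
  set F : ℤ → ℂ := fun y'' => ∑ y ∈ Sp L q, star (ψ q κ y) * T1 w y y'' with hF
  have key : ∀ k' : K, ∑ y'' ∈ Sp L (!q), F y'' * φ (!q) k' y''
      = lam k' * (if κ = k' then 1 else 0) := by
    intro k'
    calc ∑ y'' ∈ Sp L (!q), F y'' * φ (!q) k' y''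
        = ∑ y'' ∈ Sp L (!q), ∑ y ∈ Sp L q,
            star (ψ q κ y) * T1 w y y'' * φ (!q) k' y'' := by
          refine Finset.sum_congr rfl fun y'' _ => ?_
          rw [hF]; rw [Finset.sum_mul]
      _ = ∑ y ∈ Sp L q, ∑ y'' ∈ Sp L (!q),
            star (ψ q κ y) * T1 w y y'' * φ (!q) k' y'' := Finset.sum_comm
      _ = ∑ y ∈ Sp L q, star (ψ q κ y) * (lam k' * φ q k' y) := by
          refine Finset.sum_congr rfl fun y hy => ?_
          rw [← eig q k' y hy, Finset.mul_sum]
          exact Finset.sum_congr rfl fun y'' _ => by ring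
      _ = lam k' * ∑ y ∈ Sp L q, star (ψ q κ y) * φ q k' y := by
          rw [Finset.mul_sum]; exact Finset.sum_congr rfl fun y _ => by ring
      _ = lam k' * (if κ = k' then 1 else 0) := by rw [hort q κ k']
  have expand : F y' = ∑ y'' ∈ Sp L (!q), F y'' * (if y'' = y' then 1 else 0) := by
    simp only [mul_ite, mul_one, mul_zero]
    rw [Finset.sum_ite_eq' (Sp L (!q)) y' F, if_pos hy']
  calc F y' = ∑ y'' ∈ Sp L (!q), F y'' * (if y'' = y' then 1 else 0) := expand
    _ = ∑ y'' ∈ Sp L (!q), F y'' * ∑ k' : K, φ (!q) k' y'' * star (ψ (!q) k' y') := by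
        refine Finset.sum_congr rfl fun y'' hy'' => ?_
        rw [hcomp (!q) y'' hy'' y' hy']
    _ = ∑ k' : K, (∑ y'' ∈ Sp L (!q), F y'' * φ (!q) k' y'') * star (ψ (!q) k' y') := by
        simp_rw [Finset.mul_sum, Finset.sum_mul]
        rw [Finset.sum_comm]
        exact Finset.sum_congr rfl fun k' _ => Finset.sum_congr rfl fun y'' _ => by ring
    _ = ∑ k' : K, (lam k' * (if κ = k' then 1 else 0)) * star (ψ (!q) k' y') := by
        simp_rw [key]
    _ = lam κ * star (ψ (!q) κ y') := by
        simp only [mul_ite, mul_one, mul_zero, ite_mul, zero_mul]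
        rw [Finset.sum_ite_eq Finset.univ κ (fun k' => lam k' * star (ψ (!q) k' y'))]
        simp

lemma NstepPsi {K : Type*} [Fintype K] (L : ℤ) (w : ℤ → ℤ → ℂ) {N : ℕ} (p : Bool)
    (ψp ψq : K → ℤ → ℂ) (lam : K → ℂ)
    (hleft : ∀ κ : K, ∀ y' ∈ Sp L p,
      ∑ x ∈ Sp L (!p), ψq κ x * T1 w x y' = lam κ * ψp κ y')
    (k : Fin N → K) (yf : Fin N → ℤ) (hyf : yf ∈ UU (Sp L p) N) :
    ∑ z ∈ UU (Sp L (!p)) N, BA ψq k z * TN w z yf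
      = (∏ a, lam (k a)) * BA ψp k yf := by
  obtain ⟨hyfS, hyfmono⟩ := mem_UU.mp hyf
  have hext : ∑ z ∈ UU (Sp L (!p)) N, BA ψq k z * TN w z yf
      = ∑ z ∈ Fintype.piFinset (fun _ : Fin N => Sp L (!p)), BA ψq k z * TN w z yf := by
    rw [UU]
    refine Finset.sum_filter_of_ne ?_
    intro z hz hne
    intro i j hij
    by_contra hle
    push_neg at hle
    apply hne
    by_cases hT : TN w z yf = 0
    · rw [hT, mul_zero]
    · have habs : ∀ a, |z a - yf a| = 1 := by
        intro a
        by_contra hna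
        exact hT (Finset.prod_eq_zero (Finset.mem_univ a) (by simp [T1, hna]))
      have hgap : yf i + 2 ≤ yf j := Sp_gap hyf hij
      have hi := abs_le.mp (habs i).le
      have hj := abs_le.mp (habs j).le
      have hzeq : z i = z j := by omega
      rw [BA_zero_of_y ψq k (ne_of_lt hij) hzeq, zero_mul]
  rw [hext]
  have hterm : ∀ z : Fin N → ℤ, BA ψq k z * TN w z yf
      = ∑ σ : Equiv.Perm (Fin N), ((Equiv.Perm.sign σ : ℤ) : ℂ)
          * ∏ a, (ψq (k (σ a)) (z a) * T1 w (z a) (yf a)) := by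
    intro z
    rw [BA, TN, Finset.sum_mul]
    refine Finset.sum_congr rfl fun σ _ => ?_
    rw [Finset.prod_mul_distrib]
    ring
  simp_rw [hterm]
  rw [Finset.sum_comm]
  simp_rw [← Finset.mul_sum]
  have hfact : ∀ σ : Equiv.Perm (Fin N),
      ∑ z ∈ Fintype.piFinset (fun _ : Fin N => Sp L (!p)),
        ∏ a, (ψq (k (σ a)) (z a) * T1 w (z a) (yf a))
      = ∏ a, (lam (k (σ a)) * ψp (k (σ a)) (yf a)) := by
    intro σ
    rw [← Finset.prod_univ_sum (fun _ : Fin N => Sp L (!p))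
      (fun a x => ψq (k (σ a)) x * T1 w x (yf a))]
    exact Finset.prod_congr rfl fun a _ => hleft (k (σ a)) (yf a) (hyfS a)
  calc ∑ σ : Equiv.Perm (Fin N), ((Equiv.Perm.sign σ : ℤ) : ℂ)
        * ∑ z ∈ Fintype.piFinset (fun _ : Fin N => Sp L (!p)),
          ∏ a, (ψq (k (σ a)) (z a) * T1 w (z a) (yf a))
      = ∑ σ : Equiv.Perm (Fin N), ((Equiv.Perm.sign σ : ℤ) : ℂ)
        * ((∏ a, lam (k a)) * ∏ a, ψp (k (σ a)) (yf a)) := by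
        refine Finset.sum_congr rfl fun σ _ => ?_
        rw [hfact σ, Finset.prod_mul_distrib]
        rw [Equiv.prod_comp σ (fun a => lam (k a))]
    _ = (∏ a, lam (k a)) * BA ψp k yf := by
        rw [BA, Finset.mul_sum]
        exact Finset.sum_congr rfl fun σ _ => by ring

end EigSec
noncomputable section ZSec

lemma Zgen_zero (L : ℤ) (w : ℤ → ℤ → ℂ) (v : ℤ → ℂ) {N : ℕ} (p : Bool)
    (yi yf : Fin N → ℤ) (hyi : yi ∈ UU (Sp L p) N) :
    Zgen L w v N 0 yi yf = if yi = yf then ∏ a, v (yi a) else 0 := by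
  obtain ⟨hyiS, hyimono⟩ := mem_UU.mp hyi
  have hIcc : ∀ a, yi a ∈ Finset.Icc 0 L := fun a => by
    have h := mem_Sp.mp (hyiS a); exact Finset.mem_Icc.mpr ⟨h.1, h.2.1⟩
  rw [Zgen]
  by_cases h : yi = yf
  · subst h
    have hset : (Fintype.piFinset
        (fun _ : Fin N => Fintype.piFinset (fun _ : Fin 1 => Finset.Icc 0 L))).filter
          (stripCond L yi yi) = {fun j (_ : Fin 1) => yi j} := by
      ext u
      simp only [Finset.mem_filter, Fintype.mem_piFinset, Finset.mem_singleton]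
      constructor
      · rintro ⟨hu, hc⟩
        funext j m
        have hm : m = 0 := Fin.ext (Nat.lt_one_iff.mp m.isLt)
        rw [hm]
        exact hc.1 j
      · rintro rfl
        refine ⟨fun j m => hIcc j, ?_, ?_, fun j m => ⟨(Finset.mem_Icc.mp (hIcc j)).1,
          (Finset.mem_Icc.mp (hIcc j)).2⟩, fun j m => m.elim0, fun m i j hij => hyimono i j hij⟩
        · exact fun j => rfl
        · exact fun j => rfl
    rw [hset, Finset.sum_singleton, if_pos rfl, walkWeight]
    simp
  · rw [if_neg h]
    rw [Finset.filter_eq_empty_iff.mpr, Finset.sum_empty]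
    rintro u hu ⟨hc1, hc2, -⟩
    refine h (funext fun j => ?_)
    rw [← hc1 j, ← hc2 j]
    exact congrArg (u j) (by decide)

lemma walkWeight_succ (w : ℤ → ℤ → ℂ) (v : ℤ → ℂ) {N t : ℕ} (y : Fin N → Fin (t + 2) → ℤ) :
    walkWeight w v y = walkWeight w v (fun j => Fin.init (y j))
      * ∏ j, w (y j (Fin.last t).castSucc) (y j (Fin.last (t + 1))) := by
  rw [walkWeight, walkWeight,
    Fin.prod_univ_castSucc (f := fun m : Fin (t + 1) => ∏ j, w (y j m.castSucc) (y j m.succ)),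
    ← mul_assoc]
  rfl

lemma Zstep (L : ℤ) (w : ℤ → ℤ → ℂ) (v : ℤ → ℂ) {N : ℕ} (t : ℕ) (p : Bool)
    (yi yf : Fin N → ℤ) (hyf : yf ∈ UU (Sp L p) N) :
    Zgen L w v N (t + 1) yi yf
      = ∑ z ∈ UU (Sp L (!p)) N, Zgen L w v N t yi z * TN w z yf := by
  obtain ⟨hyfS, hyfmono⟩ := mem_UU.mp hyf
  have hyfb : ∀ a, 0 ≤ yf a ∧ yf a ≤ L := fun a => by
    have h := mem_Sp.mp (hyfS a); exact ⟨h.1, h.2.1⟩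
  set endpt : (Fin N → Fin (t + 1) → ℤ) → (Fin N → ℤ) := fun u j => u j (Fin.last t)
    with hendpt
  set Pt := Fintype.piFinset
    (fun _ : Fin N => Fintype.piFinset (fun _ : Fin (t + 1) => Finset.Icc 0 L)) with hPt
  set B := Pt.filter
    (fun u => stripCond L yi (endpt u) u ∧ endpt u ∈ UU (Sp L (!p)) N) with hB
  have hsetz : ∀ z ∈ UU (Sp L (!p)) N,
      Pt.filter (stripCond L yi z) = B.filter (fun u => endpt u = z) := by
    intro z hz
    ext u
    simp only [hB, Finset.mem_filter, and_assoc]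
    constructor
    · rintro ⟨hu, hc⟩
      have hz' : endpt u = z := by rw [hendpt]; exact funext fun j => hc.2.1 j
      rw [hz']
      exact ⟨hu, hz' ▸ hc, hz, rfl⟩
    · rintro ⟨hu, hcond, -, hzeq⟩
      exact ⟨hu, hzeq ▸ hcond⟩
  have h1 : ∀ z ∈ UU (Sp L (!p)) N, Zgen L w v N t yi z * TN w z yf
      = ∑ u ∈ B.filter (fun u => endpt u = z), walkWeight w v u * TN w (endpt u) yf := by
    intro z hz
    rw [Zgen, Finset.sum_mul, ← hPt, hsetz z hz]
    refine Finset.sum_congr rfl fun u hu => ?_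
    rw [(Finset.mem_filter.mp hu).2]
  rw [Finset.sum_congr rfl h1]
  rw [Finset.sum_fiberwise_of_maps_to (fun u hu => (Finset.mem_filter.mp hu).2.2)]
  set B' := B.filter (fun u => ∀ a, yf a = endpt u a + 1 ∨ yf a = endpt u a - 1) with hB'
  have h2 : ∑ u ∈ B, walkWeight w v u * TN w (endpt u) yf
      = ∑ u ∈ B', walkWeight w v u * TN w (endpt u) yf := by
    rw [hB']
    refine (Finset.sum_filter_of_ne ?_).symm
    intro u _ hne a
    have hT : TN w (endpt u) yf ≠ 0 := fun h => hne (by rw [h, mul_zero])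
    have habs : |endpt u a - yf a| = 1 := by
      by_contra hna
      exact hT (Finset.prod_eq_zero (Finset.mem_univ a) (by simp [T1, hna]))
    rcases (abs_eq (by norm_num : (0:ℤ) ≤ 1)).mp habs with h | h
    · right; omega
    · left; omega
  rw [h2]
  rw [Zgen]
  refine Finset.sum_nbij' (fun y j => Fin.init (y j)) (fun u j => Fin.snoc (u j) (yf j))
    ?_ ?_ ?_ ?_ ?_
  · -- maps into B'
    intro y hy
    obtain ⟨hy1, hc⟩ := Finset.mem_filter.mp hy
    rw [Fintype.mem_piFinset] at hy1
    have hy2 : ∀ j m, y j m ∈ Finset.Icc 0 L := fun j => (Fintype.mem_piFinset).mp (hy1 j)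
    obtain ⟨hstart, hend, hbound, hstep, hord⟩ := hc
    have hlaststep : ∀ j, yf j = y j (Fin.last t).castSucc + 1
        ∨ yf j = y j (Fin.last t).castSucc - 1 := by
      intro j
      have h := hstep j (Fin.last t)
      rw [Fin.succ_last, hend j] at h
      exact h
    have hE : ∀ a, endpt (fun j => Fin.init (y j)) a = y a (Fin.last t).castSucc := by
      intro a; rw [hendpt]; rfl
    rw [hB', Finset.mem_filter, hB, Finset.mem_filter]
    refine ⟨⟨?_, ?_, ?_⟩, fun a => by rw [hE a]; exact hlaststep a⟩
    · rw [hPt, Fintype.mem_piFinset]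
      intro j
      rw [Fintype.mem_piFinset]
      intro m
      exact hy2 j m.castSucc
    · refine ⟨fun j => ?_, fun j => by rw [hendpt], fun j m => ?_, fun j m => ?_,
        fun m i j hij => ?_⟩
      · show y j (0 : Fin (t + 1)).castSucc = yi j
        rw [Fin.castSucc_zero]
        exact hstart j
      · exact hbound j m.castSucc
      · show y j m.succ.castSucc = y j m.castSucc.castSucc + 1
          ∨ y j m.succ.castSucc = y j m.castSucc.castSucc - 1
        rw [← Fin.succ_castSucc]
        exact hstep j m.castSucc
      · exact hord m.castSucc i j hij
    · refine mem_UU.mpr ⟨fun j => ?_, fun i j hij => ?_⟩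
      · rw [hE j]
        have hb := hbound j (Fin.last t).castSucc
        have hpar := (mem_Sp.mp (hyfS j)).2.2
        refine mem_Sp.mpr ⟨hb.1, hb.2, ?_⟩
        cases p with
        | true =>
          simp only [if_true] at hpar
          simp only [Bool.not_true, Bool.false_eq_true, if_false]
          obtain ⟨m, hm⟩ := hpar
          rcases hlaststep j with h | h
          · exact ⟨m, by omega⟩
          · exact ⟨m + 1, by omega⟩
        | false =>
          simp only [Bool.false_eq_true, if_false] at hpar
          simp only [Bool.not_false, if_true]
          obtain ⟨m, hm⟩ := hpar
          rcases hlaststep j with h | h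
          · exact ⟨m - 1, by omega⟩
          · exact ⟨m, by omega⟩
      · rw [hE i, hE j]
        exact hord (Fin.last t).castSucc i j hij
  · -- snoc maps into the filtered walk set
    intro u hu
    rw [hB', Finset.mem_filter, hB, Finset.mem_filter] at hu
    obtain ⟨⟨hu1, hcond, huU⟩, hstep1⟩ := hu
    obtain ⟨hstart, hend, hbound, hstep, hord⟩ := hcond
    rw [hendpt] at hstep1
    simp only at hstep1
    have hu1' : ∀ j m, u j m ∈ Finset.Icc 0 L := by
      rw [hPt, Fintype.mem_piFinset] at hu1
      intro j
      have h := hu1 j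
      rw [Fintype.mem_piFinset] at h
      exact h
    rw [Finset.mem_filter]
    constructor
    · rw [Fintype.mem_piFinset]
      intro j
      rw [Fintype.mem_piFinset]
      intro m
      show (Fin.snoc (u j) (yf j) : Fin (t + 2) → ℤ) m ∈ Finset.Icc 0 L
      induction m using Fin.lastCases with
      | last => rw [Fin.snoc_last]; exact Finset.mem_Icc.mpr (hyfb j)
      | cast m => rw [Fin.snoc_castSucc]; exact hu1' j m
    · refine ⟨fun j => ?_, fun j => ?_, fun j m => ?_, fun j m => ?_, fun m i j hij => ?_⟩
      · show (Fin.snoc (u j) (yf j) : Fin (t + 2) → ℤ) 0 = yi j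
        have h0 : (0 : Fin (t + 2)) = (0 : Fin (t + 1)).castSucc := (Fin.castSucc_zero).symm
        rw [h0, Fin.snoc_castSucc]
        exact hstart j
      · show (Fin.snoc (u j) (yf j) : Fin (t + 2) → ℤ) (Fin.last (t + 1)) = yf j
        rw [Fin.snoc_last]
      · show 0 ≤ (Fin.snoc (u j) (yf j) : Fin (t + 2) → ℤ) m ∧ (Fin.snoc (u j) (yf j) : Fin (t + 2) → ℤ) m ≤ L
        induction m using Fin.lastCases with
        | last => rw [Fin.snoc_last]; exact hyfb j
        | cast m => rw [Fin.snoc_castSucc]; exact hbound j m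
      · show (Fin.snoc (u j) (yf j) : Fin (t + 2) → ℤ) m.succ
              = (Fin.snoc (u j) (yf j) : Fin (t + 2) → ℤ) m.castSucc + 1
          ∨ (Fin.snoc (u j) (yf j) : Fin (t + 2) → ℤ) m.succ
              = (Fin.snoc (u j) (yf j) : Fin (t + 2) → ℤ) m.castSucc - 1
        induction m using Fin.lastCases with
        | last =>
          rw [Fin.succ_last, Fin.snoc_last, Fin.snoc_castSucc]
          exact hstep1 j
        | cast m =>
          rw [Fin.succ_castSucc, Fin.snoc_castSucc, Fin.snoc_castSucc]
          exact hstep j m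
      · show (Fin.snoc (u i) (yf i) : Fin (t + 2) → ℤ) m < (Fin.snoc (u j) (yf j) : Fin (t + 2) → ℤ) m
        induction m using Fin.lastCases with
        | last =>
          rw [Fin.snoc_last, Fin.snoc_last]
          exact hyfmono i j hij
        | cast m =>
          rw [Fin.snoc_castSucc, Fin.snoc_castSucc]
          exact hord m i j hij
  · -- left inverse
    intro y hy
    obtain ⟨-, hc⟩ := Finset.mem_filter.mp hy
    funext j
    show (Fin.snoc (Fin.init (y j)) (yf j) : Fin (t + 2) → ℤ) = y j
    rw [← hc.2.1 j]
    exact Fin.snoc_init_self (y j)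
  · -- right inverse
    intro u hu
    funext j
    show Fin.init (Fin.snoc (u j) (yf j) : Fin (t + 2) → ℤ) = u j
    simp
  · -- weights match
    intro y hy
    obtain ⟨-, hc⟩ := Finset.mem_filter.mp hy
    obtain ⟨hstart, hend, hbound, hstep, hord⟩ := hc
    have hstepj : ∀ j, yf j = y j (Fin.last t).castSucc + 1
        ∨ yf j = y j (Fin.last t).castSucc - 1 := by
      intro j
      have h := hstep j (Fin.last t)
      rw [Fin.succ_last, hend j] at h
      exact h
    have hTN : TN w (endpt (fun j => Fin.init (y j))) yf
        = ∏ j, w (y j (Fin.last t).castSucc) (y j (Fin.last (t + 1))) := by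
      rw [TN]
      refine Finset.prod_congr rfl fun j _ => ?_
      have hE : endpt (fun j => Fin.init (y j)) j = y j (Fin.last t).castSucc := by
        rw [hendpt]; rfl
      rw [hE, hend j]
      have habs : |y j (Fin.last t).castSucc - yf j| = 1 := by
        rcases hstepj j with h | h <;> rw [h] <;> simp
      rw [T1, if_pos habs]
    rw [walkWeight_succ, hTN]

end ZSec
/-- spectral formula for the `N`-walk generating function (Lemma 3).
Parity is encoded by a Boolean: `true ↦ odd`, `false ↦ even`; `p' = p` for even `t` and
the opposite parity for odd `t`. -/
theorem Zgen_spectral_formula (L : ℤ) (hL : Odd L) (hL1 : 1 ≤ L) (w : ℤ → ℤ → ℂ) (v : ℤ → ℂ)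
    (K : Type*) [Fintype K] [LinearOrder K] (hK : Fintype.card K = ((L + 1) / 2).toNat)
    (φ ψ : Bool → K → ℤ → ℂ) (lam : K → ℂ)
    (heo : ∀ k, ∀ y ∈ SetE L, ∑ y' ∈ SetO L, T1 w y y' * φ true k y' = lam k * φ false k y)
    (hoe : ∀ k, ∀ y ∈ SetO L, ∑ y' ∈ SetE L, T1 w y y' * φ false k y' = lam k * φ true k y)
    (hort : ∀ (p : Bool) (k k' : K),
      ∑ y ∈ Sp L p, star (ψ p k y) * φ p k' y = if k = k' then 1 else 0)
    (hcomp : ∀ (p : Bool), ∀ y ∈ Sp L p, ∀ y' ∈ Sp L p,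
      ∑ k : K, φ p k y * star (ψ p k y') = if y = y' then 1 else 0)
    (N : ℕ) (hN : 1 ≤ N) (t : ℕ) (p : Bool) (yi yf : Fin N → ℤ)
    (hyi : yi ∈ UU (Sp L (if Even t then p else !p)) N) (hyf : yf ∈ UU (Sp L p) N) :
    Zgen L w v N t yi yf =
      (∏ a, v (yi a)) *
        ∑ k ∈ UU (Finset.univ : Finset K) N,
          BA (φ (if Even t then p else !p)) k yi * (∏ a, lam (k a)) ^ t *
            star (BA (ψ p) k yf) := by
  have eig : ∀ (q : Bool) (κ : K), ∀ y ∈ Sp L q,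
      ∑ y' ∈ Sp L (!q), T1 w y y' * φ (!q) κ y' = lam κ * φ q κ y := by
    intro q κ y hy
    cases q with
    | true => exact hoe κ y hy
    | false => exact heo κ y hy
  have hleft := left_eig L w φ ψ lam eig hort hcomp
  induction t generalizing p yf with
  | zero =>
    simp only [Even.zero, if_true] at hyi ⊢
    rw [Zgen_zero L w v p yi yf hyi]
    have hCB := sum_BA_mul_BA (Sp L p) (φ p) (fun κ x => star (ψ p κ x)) (hcomp p) hyi hyf
    simp only [pow_zero, mul_one]
    simp_rw [star_BA]
    rw [hCB]
    split_ifs <;> ring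
  | succ t ih =>
    rw [Zstep L w v t p yi yf hyf]
    have hpar : (if Even (t + 1) then p else !p) = (if Even t then !p else !(!p)) := by
      by_cases h : Even t
      · have h2 : ¬ Even (t + 1) := by simp [Nat.even_add_one, h]
        simp [h, h2]
      · have h2 : Even (t + 1) := Nat.even_add_one.mpr h
        simp [h, h2]
    rw [hpar] at hyi ⊢
    have hNs : ∀ k : Fin N → K,
        ∑ z ∈ UU (Sp L (!p)) N, BA (fun κ x => star (ψ (!p) κ x)) k z * TN w z yf
          = (∏ a, lam (k a)) * BA (fun κ x => star (ψ p κ x)) k yf := by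
      intro k
      refine NstepPsi L w p (fun κ x => star (ψ p κ x)) (fun κ x => star (ψ (!p) κ x))
        lam ?_ k yf hyf
      intro κ y' hy'
      have h := hleft (!p) κ y' (by rwa [Bool.not_not])
      rwa [Bool.not_not] at h
    calc ∑ z ∈ UU (Sp L (!p)) N, Zgen L w v N t yi z * TN w z yf
        = ∑ z ∈ UU (Sp L (!p)) N, ∑ k ∈ UU (Finset.univ : Finset K) N,
            (∏ a, v (yi a)) * ((BA (φ (if Even t then !p else !(!p))) k yi
              * (∏ a, lam (k a)) ^ t)
              * (star (BA (ψ (!p)) k z) * TN w z yf)) := by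
          refine Finset.sum_congr rfl fun z hz => ?_
          rw [ih (!p) z hyi hz, Finset.mul_sum, Finset.sum_mul]
          exact Finset.sum_congr rfl fun k _ => by ring
      _ = ∑ k ∈ UU (Finset.univ : Finset K) N,
            (∏ a, v (yi a)) * ((BA (φ (if Even t then !p else !(!p))) k yi
              * (∏ a, lam (k a)) ^ t)
              * ∑ z ∈ UU (Sp L (!p)) N, star (BA (ψ (!p)) k z) * TN w z yf) := by
          rw [Finset.sum_comm]
          simp_rw [← Finset.mul_sum]
      _ = ∑ k ∈ UU (Finset.univ : Finset K) N,
            (∏ a, v (yi a)) * ((BA (φ (if Even t then !p else !(!p))) k yi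
              * (∏ a, lam (k a)) ^ t)
              * ((∏ a, lam (k a)) * BA (fun κ x => star (ψ p κ x)) k yf)) := by
          refine Finset.sum_congr rfl fun k _ => ?_
          simp_rw [star_BA]
          rw [hNs k]
      _ = (∏ a, v (yi a)) * ∑ k ∈ UU (Finset.univ : Finset K) N,
            BA (φ (if Even t then !p else !(!p))) k yi * (∏ a, lam (k a)) ^ (t + 1)
              * star (BA (ψ p) k yf) := by
          rw [Finset.mul_sum]
          refine Finset.sum_congr rfl fun k _ => ?_
          rw [star_BA, pow_succ]
          ring
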